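/- Let X follow a hypergeometric distribution Hyper(K, N, N') (the number of blue balls when N' balls are drawn without replacement from a jar of N balls, K of which are blue), and set p = K/N. Then for any 0 < ε < p·N', P[X ≥ (p+ε)·N'] ≤ exp(−2ε²·N'). -/

import Mathlib

open Finset

lemma descFactorial_mul_pow_le (K N : ℕ) (hK : K ≤ N) (i : ℕ) :
    K.descFactorial i * N ^ i ≤ N.descFactorial i * K ^ i := by
  induction i with
  | zero => simp
  | succ i ih =>
    rw [Nat.descFactorial_succ, Nat.descFactorial_succ, pow_succ, pow_succ]
    have h1 : (K - i) * N ≤ (N - i) * K := by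
      rw [Nat.sub_mul, Nat.sub_mul]
      have h2 : i * K ≤ i * N := Nat.mul_le_mul_left _ hK
      have h3 : K * N = N * K := Nat.mul_comm _ _
      omega
    calc (K - i) * K.descFactorial i * (N ^ i * N)
        = ((K - i) * N) * (K.descFactorial i * N ^ i) := by ring
      _ ≤ ((N - i) * K) * (N.descFactorial i * K ^ i) := Nat.mul_le_mul h1 ih
      _ = (N - i) * N.descFactorial i * (K ^ i * K) := by ring

lemma choose_mul_pow_le (K N i : ℕ) (hK : K ≤ N) :
    K.choose i * N ^ i ≤ N.choose i * K ^ i := by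
  have h := descFactorial_mul_pow_le K N hK i
  rw [Nat.descFactorial_eq_factorial_mul_choose, Nat.descFactorial_eq_factorial_mul_choose,
    mul_assoc, mul_assoc] at h
  exact Nat.le_of_mul_le_mul_left h (Nat.factorial_pos i)

lemma moment_id (K N N' i : ℕ) (hK : K ≤ N) (hN' : N' ≤ N) (hi : i ≤ N') :
    ∑ t ∈ Finset.range (N' + 1), t.choose i * (K.choose t * (N - K).choose (N' - t))
      = K.choose i * (N - i).choose (N' - i) := by
  rcases le_or_gt i K with hiK | hiK
  · have e1 : ∑ t ∈ Finset.range (N' + 1),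
        t.choose i * (K.choose t * (N - K).choose (N' - t))
        = ∑ t ∈ Finset.Ico i (N' + 1), t.choose i * (K.choose t * (N - K).choose (N' - t)) := by
      refine (Finset.sum_subset ?_ ?_).symm
      · intro t ht
        simp only [Finset.mem_Ico] at ht
        simp only [Finset.mem_range]
        omega
      · intro t ht hnt
        simp only [Finset.mem_range] at ht
        simp only [Finset.mem_Ico] at hnt
        have : t < i := by omega
        rw [Nat.choose_eq_zero_of_lt this, zero_mul]
    rw [e1, Finset.sum_Ico_eq_sum_range]
    have e2 : ∀ s ∈ Finset.range (N' + 1 - i),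
        (i + s).choose i * (K.choose (i + s) * (N - K).choose (N' - (i + s)))
        = K.choose i * ((K - i).choose s * (N - K).choose (N' - i - s)) := by
      intro s hs
      have harg : N' - (i + s) = N' - i - s := by omega
      rw [harg]
      rcases le_or_gt (i + s) K with h | h
      · have hcm := Nat.choose_mul (n := K) (Nat.le_add_right i s)
        rw [Nat.add_sub_cancel_left] at hcm
        calc (i + s).choose i * (K.choose (i + s) * (N - K).choose (N' - i - s))
            = K.choose (i + s) * (i + s).choose i * (N - K).choose (N' - i - s) := by ring
          _ = K.choose i * (K - i).choose s * (N - K).choose (N' - i - s) := by rw [hcm]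
          _ = K.choose i * ((K - i).choose s * (N - K).choose (N' - i - s)) := by ring
      · rw [Nat.choose_eq_zero_of_lt h, Nat.choose_eq_zero_of_lt (by omega : K - i < s)]
        ring
    rw [Finset.sum_congr rfl e2, ← Finset.mul_sum]
    congr 1
    have hv : ((K - i) + (N - K)).choose (N' - i)
        = ∑ s ∈ Finset.range ((N' - i) + 1), (K - i).choose s * (N - K).choose (N' - i - s) := by
      rw [Nat.add_choose_eq, Finset.Nat.sum_antidiagonal_eq_sum_range_succ_mk]
    have harith : (K - i) + (N - K) = N - i := by omega
    have hr : N' + 1 - i = (N' - i) + 1 := by omega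
    rw [hr, ← hv, harith]
  · rw [Nat.choose_eq_zero_of_lt hiK, zero_mul]
    apply Finset.sum_eq_zero
    intro t ht
    rcases lt_or_ge t i with h | h
    · rw [Nat.choose_eq_zero_of_lt h, zero_mul]
    · rw [Nat.choose_eq_zero_of_lt (lt_of_lt_of_le hiK h), zero_mul, mul_zero]

lemma hoeffding_scalar {p : ℝ} (hp0 : 0 ≤ p) (hp1 : p ≤ 1) {x : ℝ} (hx : 0 ≤ x) :
    1 - p + p * Real.exp x ≤ Real.exp (p * x + x ^ 2 / 8) := by
  have hD : ∀ t : ℝ, 0 < 1 - p + p * Real.exp t := by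
    intro t
    have h := Real.exp_pos t
    rcases eq_or_lt_of_le hp0 with h0 | h0
    · simp [← h0]
    · nlinarith
  have hDd : ∀ t : ℝ, HasDerivAt (fun s => 1 - p + p * Real.exp s) (p * Real.exp t) t :=
    fun t => ((Real.hasDerivAt_exp t).const_mul p).const_add (1 - p)
  set g : ℝ → ℝ := fun t => p + t / 4 - p * Real.exp t / (1 - p + p * Real.exp t) with hgdef
  have hgd : ∀ t : ℝ, HasDerivAt g
      (1 / 4 - (p * Real.exp t * (1 - p + p * Real.exp t) -
        p * Real.exp t * (p * Real.exp t)) / (1 - p + p * Real.exp t) ^ 2) t := by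
    intro t
    have h1 : HasDerivAt (fun t : ℝ => p + t / 4) (1 / 4) t := by
      simpa using ((hasDerivAt_id t).div_const 4).const_add p
    have h2 : HasDerivAt (fun t => p * Real.exp t / (1 - p + p * Real.exp t))
        ((p * Real.exp t * (1 - p + p * Real.exp t) -
          p * Real.exp t * (p * Real.exp t)) / (1 - p + p * Real.exp t) ^ 2) t :=
      ((Real.hasDerivAt_exp t).const_mul p).div (hDd t) (ne_of_gt (hD t))
    exact h1.sub h2
  have hg0 : ∀ t : ℝ, 0 ≤ 1 / 4 - (p * Real.exp t * (1 - p + p * Real.exp t) -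
      p * Real.exp t * (p * Real.exp t)) / (1 - p + p * Real.exp t) ^ 2 := by
    intro t
    have hDt := hD t
    have he := Real.exp_pos t
    rw [sub_nonneg, div_le_iff₀ (by positivity)]
    nlinarith [sq_nonneg ((1 - p) - p * Real.exp t)]
  have hgmono : Monotone g := monotone_of_deriv_nonneg (fun t => (hgd t).differentiableAt)
    (fun t => by rw [(hgd t).deriv]; exact hg0 t)
  have hgz : g 0 = 0 := by
    simp only [hgdef, Real.exp_zero, mul_one]
    have h1 : 1 - p + p = 1 := by ring
    rw [h1]
    ring
  have hgnn : ∀ t : ℝ, 0 ≤ t → 0 ≤ g t := fun t ht => hgz ▸ hgmono ht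
  set f : ℝ → ℝ := fun t => p * t + t ^ 2 / 8 - Real.log (1 - p + p * Real.exp t) with hfdef
  have hfd : ∀ t : ℝ, HasDerivAt f (g t) t := by
    intro t
    have ha : HasDerivAt (fun t : ℝ => p * t) p t := by
      simpa using (hasDerivAt_id t).const_mul p
    have hb : HasDerivAt (fun t : ℝ => t ^ 2 / 8) (2 * t ^ 1 / 8) t :=
      (hasDerivAt_pow 2 t).div_const 8
    have h2 : HasDerivAt (fun t => Real.log (1 - p + p * Real.exp t))
        (p * Real.exp t / (1 - p + p * Real.exp t)) t :=
      (hDd t).log (ne_of_gt (hD t))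
    have h : HasDerivAt f (p + 2 * t ^ 1 / 8 - p * Real.exp t / (1 - p + p * Real.exp t)) t :=
      (ha.add hb).sub h2
    convert h using 1
    simp only [hgdef]
    ring
  have hfmono : MonotoneOn f (Set.Ici 0) := by
    apply monotoneOn_of_deriv_nonneg (convex_Ici 0)
    · exact fun t _ => ((hfd t).continuousAt).continuousWithinAt
    · exact fun t _ => ((hfd t).differentiableAt).differentiableWithinAt
    · intro t ht
      rw [interior_Ici] at ht
      rw [(hfd t).deriv]
      exact hgnn t (le_of_lt ht)
  have hfz : f 0 = 0 := by
    simp only [hfdef, Real.exp_zero, mul_one, mul_zero]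
    have h1 : 1 - p + p = 1 := by ring
    rw [h1]
    simp
  have hfx : (0 : ℝ) ≤ f x := by
    have := hfmono Set.self_mem_Ici (Set.mem_Ici.mpr hx) hx
    rwa [hfz] at this
  have hlog : Real.log (1 - p + p * Real.exp x) ≤ p * x + x ^ 2 / 8 := by
    simp only [hfdef] at hfx
    linarith
  calc 1 - p + p * Real.exp x = Real.exp (Real.log (1 - p + p * Real.exp x)) :=
        (Real.exp_log (hD x)).symm
    _ ≤ Real.exp (p * x + x ^ 2 / 8) := Real.exp_le_exp.mpr hlog

/-- Hoeffding's tail bound for the hypergeometric distribution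
`Hyper(K, N, N')`: drawing `N'` balls without replacement from a jar of `N`
balls, `K` of which are blue, with `P[X = t] = C(K,t)·C(N−K,N'−t)/C(N,N')`,
and `p = K/N`, for any `0 < ε < p·N'` we have
`P[X ≥ (p+ε)·N'] ≤ exp(−2ε²·N')`. -/
theorem hypergeometric_tail_bound (K N N' : ℕ) (hK : K ≤ N) (hN' : N' ≤ N)
    (hN : 0 < N) (ε : ℝ) (hε : 0 < ε) (hεp : ε < (K : ℝ) / N * N') :
    ∑ t ∈ (Finset.range (N' + 1)).filter
        (fun t : ℕ => ((K : ℝ) / N + ε) * N' ≤ (t : ℝ)),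
      ((K.choose t : ℝ) * ((N - K).choose (N' - t) : ℝ) / (N.choose N' : ℝ))
      ≤ Real.exp (-2 * ε ^ 2 * N') := by
  have hNpos : (0 : ℝ) < N := by exact_mod_cast hN
  set p : ℝ := (K : ℝ) / N with hpdef
  have hp0 : 0 ≤ p := div_nonneg (Nat.cast_nonneg K) (le_of_lt hNpos)
  have hp1 : p ≤ 1 := by
    rw [hpdef, div_le_one hNpos]
    exact_mod_cast hK
  have hCN : (0 : ℝ) < (N.choose N' : ℝ) := by exact_mod_cast Nat.choose_pos hN'
  set y : ℝ := Real.exp (4 * ε) with hydef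
  have hy1 : 1 ≤ y := Real.one_le_exp (by linarith)
  set z : ℝ := y - 1 with hzdef
  have hz : 0 ≤ z := by simp only [hzdef]; linarith
  set m : ℝ := (p + ε) * N' with hmdef
  set w : ℕ → ℝ :=
    fun t => (K.choose t : ℝ) * ((N - K).choose (N' - t) : ℝ) / (N.choose N' : ℝ) with hwdef
  have hwnn : ∀ t, 0 ≤ w t := fun t => by
    simp only [hwdef]
    positivity
  -- MGF bound (Chvátal): ∑ yᵗ·w(t) ≤ (1 - p + p·y)^N'
  have hS : ∑ t ∈ Finset.range (N' + 1), y ^ t * w t ≤ (1 - p + p * y) ^ N' := by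
    have hyt : ∀ t ∈ Finset.range (N' + 1),
        y ^ t = ∑ i ∈ Finset.range (N' + 1), (t.choose i : ℝ) * z ^ i := by
      intro t ht
      simp only [Finset.mem_range] at ht
      calc y ^ t = (z + 1) ^ t := by rw [hzdef]; ring_nf
        _ = ∑ i ∈ Finset.range (t + 1), z ^ i * 1 ^ (t - i) * (t.choose i : ℝ) :=
            add_pow z 1 t
        _ = ∑ i ∈ Finset.range (N' + 1), z ^ i * 1 ^ (t - i) * (t.choose i : ℝ) := by
            refine Finset.sum_subset (Finset.range_subset_range.mpr (by omega)) ?_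
            intro i hi hni
            simp only [Finset.mem_range] at hi hni
            rw [Nat.choose_eq_zero_of_lt (by omega)]
            simp
        _ = ∑ i ∈ Finset.range (N' + 1), (t.choose i : ℝ) * z ^ i := by
            refine Finset.sum_congr rfl fun i _ => ?_
            rw [one_pow]
            ring
    calc ∑ t ∈ Finset.range (N' + 1), y ^ t * w t
        = ∑ t ∈ Finset.range (N' + 1), ∑ i ∈ Finset.range (N' + 1),
            (t.choose i : ℝ) * z ^ i * w t := by
          refine Finset.sum_congr rfl fun t ht => ?_
          rw [hyt t ht, Finset.sum_mul]
      _ = ∑ i ∈ Finset.range (N' + 1), ∑ t ∈ Finset.range (N' + 1),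
            (t.choose i : ℝ) * z ^ i * w t := Finset.sum_comm
      _ = ∑ i ∈ Finset.range (N' + 1), z ^ i *
            ∑ t ∈ Finset.range (N' + 1), (t.choose i : ℝ) * w t := by
          refine Finset.sum_congr rfl fun i _ => ?_
          rw [Finset.mul_sum]
          exact Finset.sum_congr rfl fun t _ => by ring
      _ ≤ ∑ i ∈ Finset.range (N' + 1), z ^ i * ((N'.choose i : ℝ) * p ^ i) := by
          apply Finset.sum_le_sum
          intro i hi
          have hiN' : i ≤ N' := Finset.mem_range_succ_iff.mp hi
          apply mul_le_mul_of_nonneg_left _ (pow_nonneg hz i)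
          have hsum : ∑ t ∈ Finset.range (N' + 1), (t.choose i : ℝ) * w t
              = ((K.choose i : ℝ) * ((N - i).choose (N' - i) : ℝ)) / (N.choose N' : ℝ) := by
            have hm2 : ((∑ t ∈ Finset.range (N' + 1),
                t.choose i * (K.choose t * (N - K).choose (N' - t)) : ℕ) : ℝ)
                = (K.choose i : ℝ) * ((N - i).choose (N' - i) : ℝ) := by
              rw [moment_id K N N' i hK hN' hiN']
              push_cast
              ring
            push_cast at hm2
            rw [← hm2, Finset.sum_div]
            refine Finset.sum_congr rfl fun t _ => ?_
            simp only [hwdef]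
            ring
          rw [hsum]
          have hid : (N.choose N' : ℝ) * (N'.choose i : ℝ)
              = (N.choose i : ℝ) * ((N - i).choose (N' - i) : ℝ) := by
            exact_mod_cast congrArg (Nat.cast : ℕ → ℝ) (Nat.choose_mul (n := N) hiN')
          have hratio : (K.choose i : ℝ) * (N : ℝ) ^ i ≤ (N.choose i : ℝ) * (K : ℝ) ^ i := by
            exact_mod_cast choose_mul_pow_le K N i hK
          have hCNi : (0 : ℝ) < (N.choose i : ℝ) := by
            exact_mod_cast Nat.choose_pos (le_trans hiN' hN')
          have hNpow : (0 : ℝ) < (N : ℝ) ^ i := by positivity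
          rw [div_le_iff₀ hCN]
          calc (K.choose i : ℝ) * ((N - i).choose (N' - i) : ℝ)
              ≤ ((N.choose i : ℝ) * (K : ℝ) ^ i / (N : ℝ) ^ i) *
                  ((N - i).choose (N' - i) : ℝ) := by
                apply mul_le_mul_of_nonneg_right _ (Nat.cast_nonneg _)
                rw [le_div_iff₀ hNpow]
                exact hratio
            _ = (N'.choose i : ℝ) * p ^ i * (N.choose N' : ℝ) := by
                rw [hpdef, div_pow]
                field_simp
                linear_combination (-(K : ℝ) ^ i) * hid
      _ = ∑ i ∈ Finset.range (N' + 1), (p * z) ^ i * 1 ^ (N' - i) * (N'.choose i : ℝ) := by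
          refine Finset.sum_congr rfl fun i _ => ?_
          rw [one_pow, mul_pow]
          ring
      _ = (p * z + 1) ^ N' := (add_pow (p * z) 1 N').symm
      _ = (1 - p + p * y) ^ N' := by
          rw [hzdef]
          ring_nf
  -- Step 1: tail sum ≤ exponentially tilted full sum
  have hstep1 : ∑ t ∈ (Finset.range (N' + 1)).filter (fun t : ℕ => (p + ε) * N' ≤ (t : ℝ)), w t
      ≤ ∑ t ∈ Finset.range (N' + 1), Real.exp (4 * ε * ((t : ℝ) - m)) * w t := by
    calc ∑ t ∈ (Finset.range (N' + 1)).filter (fun t : ℕ => (p + ε) * N' ≤ (t : ℝ)), w t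
        ≤ ∑ t ∈ (Finset.range (N' + 1)).filter (fun t : ℕ => (p + ε) * N' ≤ (t : ℝ)),
            Real.exp (4 * ε * ((t : ℝ) - m)) * w t := by
          apply Finset.sum_le_sum
          intro t ht
          have htm : (p + ε) * N' ≤ (t : ℝ) := (Finset.mem_filter.mp ht).2
          have h1 : (1 : ℝ) ≤ Real.exp (4 * ε * ((t : ℝ) - m)) := by
            apply Real.one_le_exp
            have : m ≤ (t : ℝ) := by rw [hmdef]; exact htm
            nlinarith
          exact le_mul_of_one_le_left (hwnn t) h1
      _ ≤ ∑ t ∈ Finset.range (N' + 1), Real.exp (4 * ε * ((t : ℝ) - m)) * w t := by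
          apply Finset.sum_le_sum_of_subset_of_nonneg (Finset.filter_subset _ _)
          intro t _ _
          exact mul_nonneg (le_of_lt (Real.exp_pos _)) (hwnn t)
  have hstep2 : ∑ t ∈ Finset.range (N' + 1), Real.exp (4 * ε * ((t : ℝ) - m)) * w t
      = Real.exp (-(4 * ε) * m) * ∑ t ∈ Finset.range (N' + 1), y ^ t * w t := by
    rw [Finset.mul_sum]
    refine Finset.sum_congr rfl fun t _ => ?_
    have h1 : Real.exp (-(4 * ε) * m) * y ^ t = Real.exp (4 * ε * ((t : ℝ) - m)) := by
      rw [hydef, ← Real.exp_nat_mul, ← Real.exp_add]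
      congr 1
      ring
    rw [← h1]
    ring
  calc ∑ t ∈ (Finset.range (N' + 1)).filter (fun t : ℕ => (p + ε) * N' ≤ (t : ℝ)), w t
      ≤ Real.exp (-(4 * ε) * m) * ∑ t ∈ Finset.range (N' + 1), y ^ t * w t := by
        rw [← hstep2]; exact hstep1
    _ ≤ Real.exp (-(4 * ε) * m) * (1 - p + p * y) ^ N' :=
        mul_le_mul_of_nonneg_left hS (le_of_lt (Real.exp_pos _))
    _ ≤ Real.exp (-(4 * ε) * m) * (Real.exp (p * (4 * ε) + (4 * ε) ^ 2 / 8)) ^ N' := by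
        apply mul_le_mul_of_nonneg_left _ (le_of_lt (Real.exp_pos _))
        apply pow_le_pow_left₀ (by nlinarith)
        exact hoeffding_scalar hp0 hp1 (by linarith : (0 : ℝ) ≤ 4 * ε)
    _ = Real.exp (-2 * ε ^ 2 * N') := by
        rw [← Real.exp_nat_mul, ← Real.exp_add]
        congr 1
        rw [hmdef]
        ring
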